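/- Let 0 < q < 1, let A(ω) = a₁ω + a₀, B(ω) = b₂ω² + b₁ω + b₀ be real polynomials, let a ≤ 0 ≤ b, and let ϱ : ℝ → ℝ be continuous at 0, satisfy the q-Pearson equation ∂_q(ϱ·B)(ω) = ϱ(ω)A(ω) for all ω ≠ 0, and satisfy the boundary conditions ϱ(a)B(a) = ϱ(b)B(b) = 0. Let (P̃_n)_{n≥0} be monic real polynomials with deg P̃_n = n such that ∫_a^b P̃_n(ω) ωʲ ϱ(ω) d_qω = 0 for all 0 ≤ j ≤ n−1 (all Jackson integrals involved being absolutely convergent). Then for every n ≥ 1 the polynomial (1/[n])·∂_q P̃_n is monic of degree n−1, where [n] = (1−qⁿ)/(1−q), and ∫_a^b (∂_q P̃_n)(ω) ωʲ ϱ⁽¹⁾(ω) d_qω = 0 for all 0 ≤ j ≤ n−2, where ϱ⁽¹⁾(ω) := ϱ(qω)B(qω). -/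
import Mathlib


/-- The q-derivative of a function: `(∂_q f)(ω) = (f(ω) − f(qω))/((1−q)ω)` (junk at `ω = 0`). -/
noncomputable def qD (q : ℝ) (f : ℝ → ℝ) (ω : ℝ) : ℝ :=
  (f ω - f (q * ω)) / ((1 - q) * ω)

/-- The q-derivative of a real polynomial: `a·Xⁿ ↦ a·[n]·Xⁿ⁻¹` where `[n] = 1 + q + ⋯ + qⁿ⁻¹`,
so that for `ω ≠ 0` its value at `ω` is `(p(ω) − p(qω))/((1−q)ω)`. -/
noncomputable def qDerivP (q : ℝ) (p : Polynomial ℝ) : Polynomial ℝ :=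
  p.sum fun n a => Polynomial.C (a * ∑ i ∈ Finset.range n, q ^ i) * Polynomial.X ^ (n - 1)

/-- The Jackson integral `∫_a^b f(ω) d_qω = (1−q)·∑_{k=0}^∞ qᵏ(b·f(qᵏb) − a·f(qᵏa))`. -/
noncomputable def jackson (q a b : ℝ) (f : ℝ → ℝ) : ℝ :=
  (1 - q) * ∑' k : ℕ, q ^ k * (b * f (q ^ k * b) - a * f (q ^ k * a))

/-- Absolute convergence of the Jackson integral of `f` on `[a,b]`. -/
def JacksonSummable (q a b : ℝ) (f : ℝ → ℝ) : Prop :=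
  Summable fun k : ℕ => |q ^ k * (b * f (q ^ k * b) - a * f (q ^ k * a))|

open Polynomial Finset
section lemmas
lemma qDerivP_add (q : ℝ) (p r : Polynomial ℝ) :
    qDerivP q (p + r) = qDerivP q p + qDerivP q r := by
  unfold qDerivP
  apply Polynomial.sum_add_index <;> intros <;> simp [add_mul]

lemma qDerivP_monomial (q : ℝ) (n : ℕ) (c : ℝ) :
    qDerivP q (Polynomial.monomial n c)
      = Polynomial.C (c * ∑ i ∈ Finset.range n, q ^ i) * Polynomial.X ^ (n - 1) := by
  unfold qDerivP
  rw [Polynomial.sum_monomial_index]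
  simp

lemma coeff_qDerivP (q : ℝ) (p : Polynomial ℝ) (k : ℕ) :
    (qDerivP q p).coeff k = p.coeff (k + 1) * ∑ i ∈ Finset.range (k + 1), q ^ i := by
  induction p using Polynomial.induction_on' with
  | add p r hp hr => simp [qDerivP_add, hp, hr, add_mul]
  | monomial n c =>
    rw [qDerivP_monomial]
    simp only [Polynomial.coeff_C_mul, Polynomial.coeff_X_pow, Polynomial.coeff_monomial]
    by_cases h : n = k + 1
    · subst h; simp
    · rw [if_neg h]
      by_cases h2 : k = n - 1
      · have hn : n = 0 := by omega
        subst hn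
        have hk : k = 0 := by omega
        subst hk
        simp
      · rw [if_neg h2]; ring

lemma qDerivP_eval_key (q : ℝ) (p : Polynomial ℝ) (ω : ℝ) :
    (1 - q) * ω * (qDerivP q p).eval ω = p.eval ω - p.eval (q * ω) := by
  induction p using Polynomial.induction_on' with
  | add p r hp hr =>
    simp only [qDerivP_add, Polynomial.eval_add]
    linear_combination hp + hr
  | monomial n c =>
    rw [qDerivP_monomial]
    simp only [Polynomial.eval_mul, Polynomial.eval_C, Polynomial.eval_pow, Polynomial.eval_X,
      Polynomial.eval_monomial]
    cases n with
    | zero => simp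
    | succ m =>
      have hS : (1 - q) * ∑ i ∈ Finset.range (m + 1), q ^ i = 1 - q ^ (m + 1) := by
        linear_combination -(geom_sum_mul q (m + 1))
      simp only [Nat.add_sub_cancel]
      linear_combination (c * ω ^ (m + 1)) * hS

lemma natDegree_qDerivP_le (q : ℝ) (p : Polynomial ℝ) :
    (qDerivP q p).natDegree ≤ p.natDegree - 1 := by
  apply Polynomial.natDegree_le_iff_coeff_eq_zero.mpr
  intro m hm
  rw [coeff_qDerivP]
  rw [Polynomial.coeff_eq_zero_of_natDegree_lt (by omega), zero_mul]

lemma jackson_smul (q a b c : ℝ) (f : ℝ → ℝ) :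
    jackson q a b (fun ω => c * f ω) = c * jackson q a b f := by
  unfold jackson
  have h : ∀ k : ℕ, q ^ k * (b * (c * f (q ^ k * b)) - a * (c * f (q ^ k * a)))
      = c * (q ^ k * (b * f (q ^ k * b) - a * f (q ^ k * a))) := fun k => by ring
  simp_rw [h]
  rw [tsum_mul_left]; ring

lemma jackson_add (q a b : ℝ) (f g : ℝ → ℝ)
    (hf : Summable fun k : ℕ => q ^ k * (b * f (q ^ k * b) - a * f (q ^ k * a)))
    (hg : Summable fun k : ℕ => q ^ k * (b * g (q ^ k * b) - a * g (q ^ k * a))) :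
    jackson q a b (fun ω => f ω + g ω) = jackson q a b f + jackson q a b g := by
  unfold jackson
  have h : ∀ k : ℕ, q ^ k * (b * (f (q ^ k * b) + g (q ^ k * b)) - a * (f (q ^ k * a) + g (q ^ k * a)))
      = q ^ k * (b * f (q ^ k * b) - a * f (q ^ k * a))
        + q ^ k * (b * g (q ^ k * b) - a * g (q ^ k * a)) := fun k => by ring
  simp_rw [h]
  rw [Summable.tsum_add hf hg]; ring

lemma jsummable_summable {q a b : ℝ} {f g : ℝ → ℝ} (h : JacksonSummable q a b f)
    (hfg : ∀ ω, g ω = f ω) :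
    Summable fun k : ℕ => q ^ k * (b * g (q ^ k * b) - a * g (q ^ k * a)) := by
  rw [show g = f from funext hfg]
  exact summable_abs_iff.mp h

lemma jackson_finsum {ι : Type*} (q a b : ℝ) (s : Finset ι) (F : ι → ℝ → ℝ)
    (hF : ∀ i ∈ s, Summable fun k : ℕ => q ^ k * (b * F i (q ^ k * b) - a * F i (q ^ k * a))) :
    jackson q a b (fun ω => ∑ i ∈ s, F i ω) = ∑ i ∈ s, jackson q a b (F i) := by
  classical
  induction s using Finset.induction_on with
  | empty => simp [jackson]
  | @insert i t hit ih =>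
    have hsum_t : Summable fun k : ℕ =>
        q ^ k * (b * (∑ j ∈ t, F j (q ^ k * b)) - a * (∑ j ∈ t, F j (q ^ k * a))) := by
      have h : ∀ k : ℕ, q ^ k * (b * (∑ j ∈ t, F j (q ^ k * b)) - a * (∑ j ∈ t, F j (q ^ k * a)))
          = ∑ j ∈ t, q ^ k * (b * F j (q ^ k * b) - a * F j (q ^ k * a)) := by
        intro k
        rw [Finset.mul_sum, Finset.mul_sum, ← Finset.sum_sub_distrib, Finset.mul_sum]
      apply Summable.congr (f := fun k => ∑ j ∈ t, q ^ k * (b * F j (q ^ k * b) - a * F j (q ^ k * a)))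
      · exact summable_sum fun j hj => hF j (Finset.mem_insert_of_mem hj)
      · exact fun k => (h k).symm
    rw [Finset.sum_insert hit]
    have hrw : (fun ω => ∑ j ∈ insert i t, F j ω)
        = fun ω => F i ω + ∑ j ∈ t, F j ω := by
      funext ω; rw [Finset.sum_insert hit]
    rw [hrw]
    rw [jackson_add q a b (F i) (fun ω => ∑ j ∈ t, F j ω)
      (hF i (Finset.mem_insert_self i t)) hsum_t]
    rw [ih (fun j hj => hF j (Finset.mem_insert_of_mem hj))]

lemma tsum_telescope_sub (q a b : ℝ) (hq0 : 0 ≤ q) (hq1 : q < 1) (G : ℝ → ℝ)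
    (hG : ContinuousAt G 0)
    (hsum : Summable fun k : ℕ =>
      (G (q ^ k * b) - G (q ^ (k + 1) * b)) - (G (q ^ k * a) - G (q ^ (k + 1) * a))) :
    ∑' k : ℕ, ((G (q ^ k * b) - G (q ^ (k + 1) * b)) - (G (q ^ k * a) - G (q ^ (k + 1) * a)))
      = G b - G a := by
  have hb : ∀ c : ℝ, Filter.Tendsto (fun k : ℕ => G (q ^ k * c)) Filter.atTop (nhds (G 0)) := by
    intro c
    have h1 : Filter.Tendsto (fun k : ℕ => q ^ k * c) Filter.atTop (nhds 0) := by
      simpa using (tendsto_pow_atTop_nhds_zero_of_lt_one hq0 hq1).mul_const c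
    exact (hG.tendsto).comp h1
  have heq : ∀ K : ℕ, ∑ k ∈ Finset.range K,
      ((G (q ^ k * b) - G (q ^ (k + 1) * b)) - (G (q ^ k * a) - G (q ^ (k + 1) * a)))
      = (G (q ^ 0 * b) - G (q ^ K * b)) - (G (q ^ 0 * a) - G (q ^ K * a)) := by
    intro K
    rw [Finset.sum_sub_distrib, Finset.sum_range_sub' (fun k => G (q ^ k * b)),
      Finset.sum_range_sub' (fun k => G (q ^ k * a))]
  have key : Filter.Tendsto (fun K : ℕ => ∑ k ∈ Finset.range K,
      ((G (q ^ k * b) - G (q ^ (k + 1) * b)) - (G (q ^ k * a) - G (q ^ (k + 1) * a))))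
      Filter.atTop (nhds (G b - G a)) := by
    simp_rw [heq]
    have h2 : Filter.Tendsto (fun K : ℕ =>
        (G (q ^ 0 * b) - G (q ^ K * b)) - (G (q ^ 0 * a) - G (q ^ K * a))) Filter.atTop
        (nhds ((G (q ^ 0 * b) - G 0) - (G (q ^ 0 * a) - G 0))) :=
      ((tendsto_const_nhds.sub (hb b)).sub (tendsto_const_nhds.sub (hb a)))
    simpa using h2
  exact ((hsum.hasSum_iff_tendsto_nat).mpr key).tsum_eq

lemma horth_ext (q a b : ℝ) (ϱ : ℝ → ℝ) (Pn : Polynomial ℝ) (n : ℕ)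
    (hsum : ∀ p : Polynomial ℝ, JacksonSummable q a b (fun ω => p.eval ω * ϱ ω))
    (horthn : ∀ j : ℕ, j + 1 ≤ n → jackson q a b (fun ω => Pn.eval ω * ω ^ j * ϱ ω) = 0)
    (p : Polynomial ℝ) (hp : ∀ i ∈ p.support, i + 1 ≤ n) :
    jackson q a b (fun ω => Pn.eval ω * p.eval ω * ϱ ω) = 0 := by
  have hrw : (fun ω => Pn.eval ω * p.eval ω * ϱ ω)
      = fun ω => ∑ i ∈ p.support, p.coeff i * (Pn.eval ω * ω ^ i * ϱ ω) := by
    funext ω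
    have hpe : p.eval ω = ∑ i ∈ p.support, p.coeff i * ω ^ i := by
      rw [Polynomial.eval_eq_sum, Polynomial.sum_def]
    rw [hpe, Finset.mul_sum, Finset.sum_mul]
    exact Finset.sum_congr rfl fun i _ => by ring
  have hFs : ∀ i ∈ p.support, Summable fun k : ℕ => q ^ k *
      (b * (p.coeff i * (Pn.eval (q ^ k * b) * (q ^ k * b) ^ i * ϱ (q ^ k * b)))
        - a * (p.coeff i * (Pn.eval (q ^ k * a) * (q ^ k * a) ^ i * ϱ (q ^ k * a)))) := by
    intro i _
    exact jsummable_summable (g := fun ω => p.coeff i * (Pn.eval ω * ω ^ i * ϱ ω))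
      (hsum (Polynomial.C (p.coeff i) * Pn * Polynomial.X ^ i))
      (fun ω => by
        simp only [Polynomial.eval_mul, Polynomial.eval_C, Polynomial.eval_pow,
          Polynomial.eval_X]
        ring)
  rw [hrw]
  rw [jackson_finsum q a b p.support
    (fun i ω => p.coeff i * (Pn.eval ω * ω ^ i * ϱ ω)) hFs]
  apply Finset.sum_eq_zero
  intro i hi
  rw [jackson_smul, horthn i (hp i hi), mul_zero]

lemma natDegree_CXp_le (c : ℝ) (k : ℕ) (p : Polynomial ℝ) :
    (Polynomial.C c * Polynomial.X ^ k * p).natDegree ≤ k + p.natDegree := by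
  apply le_trans (Polynomial.natDegree_mul_le)
  have h := Polynomial.natDegree_C_mul_le c (Polynomial.X ^ k : Polynomial ℝ)
  simp only [Polynomial.natDegree_X_pow] at h
  omega
end lemmas

/-- Let `0 < q < 1`, `A(ω) = a₁ω + a₀`, `B(ω) = b₂ω² + b₁ω + b₀`,
`a ≤ 0 ≤ b`, and let `ϱ` be continuous at `0`, satisfy the q-Pearson equation
`∂_q(ϱ·B)(ω) = ϱ(ω)A(ω)` for `ω ≠ 0` and the boundary conditions
`ϱ(a)B(a) = ϱ(b)B(b) = 0`.  Let `(P̃_n)` be monic polynomials of degree `n` with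
`∫_a^b P̃_n(ω) ωʲ ϱ(ω) d_qω = 0` for `0 ≤ j ≤ n−1` (all Jackson integrals being
absolutely convergent).  Then for every `n ≥ 1` the polynomial `(1/[n])·∂_q P̃_n`
is monic of degree `n−1`, and `∫_a^b (∂_q P̃_n)(ω) ωʲ ϱ⁽¹⁾(ω) d_qω = 0` for
`0 ≤ j ≤ n−2`, where `ϱ⁽¹⁾(ω) = ϱ(qω)B(qω)`. -/
theorem stmt_1 (q a₀ a₁ b₀ b₁ b₂ a b : ℝ) (hq0 : 0 < q) (hq1 : q < 1)
    (hab : a ≤ 0 ∧ 0 ≤ b)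
    (A B : Polynomial ℝ)
    (hA : A = Polynomial.C a₁ * Polynomial.X + Polynomial.C a₀)
    (hB : B = Polynomial.C b₂ * Polynomial.X ^ 2 + Polynomial.C b₁ * Polynomial.X
      + Polynomial.C b₀)
    (ϱ : ℝ → ℝ) (hcont : ContinuousAt ϱ 0)
    (hPearson : ∀ ω : ℝ, ω ≠ 0 →
      qD q (fun x => ϱ x * B.eval x) ω = ϱ ω * A.eval ω)
    (hbdry : ϱ a * B.eval a = 0 ∧ ϱ b * B.eval b = 0)
    (P : ℕ → Polynomial ℝ)
    (hmonic : ∀ n : ℕ, (P n).Monic)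
    (hdeg : ∀ n : ℕ, (P n).natDegree = n)
    (hsum : ∀ p : Polynomial ℝ, JacksonSummable q a b (fun ω => p.eval ω * ϱ ω))
    (hsum1 : ∀ p : Polynomial ℝ,
      JacksonSummable q a b (fun ω => p.eval ω * (ϱ (q * ω) * B.eval (q * ω))))
    (horth : ∀ n : ℕ, ∀ j : ℕ, j + 1 ≤ n →
      jackson q a b (fun ω => (P n).eval ω * ω ^ j * ϱ ω) = 0) :
    ∀ n : ℕ, 1 ≤ n →
      (Polynomial.C ((1 - q) / (1 - q ^ n)) * qDerivP q (P n)).Monic ∧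
      (Polynomial.C ((1 - q) / (1 - q ^ n)) * qDerivP q (P n)).natDegree = n - 1 ∧
      (∀ j : ℕ, j + 2 ≤ n →
        jackson q a b
          (fun ω => (qDerivP q (P n)).eval ω * ω ^ j * (ϱ (q * ω) * B.eval (q * ω))) = 0) := by
  have hq1pos : (0:ℝ) < 1 - q := by linarith
  have hq1' : (1:ℝ) - q ≠ 0 := ne_of_gt hq1pos
  intro n hn
  -- Part 1 : monicity and degree
  have hSn : (1 - q) * ∑ i ∈ Finset.range n, q ^ i = 1 - q ^ n := by
    linear_combination -(geom_sum_mul q n)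
  have hqn1 : q ^ n < 1 := pow_lt_one₀ hq0.le hq1 (by omega)
  have h1qn : (0:ℝ) < 1 - q ^ n := by linarith
  have hcoeff : (qDerivP q (P n)).coeff (n - 1) = ∑ i ∈ Finset.range n, q ^ i := by
    rw [coeff_qDerivP]
    have h1 : n - 1 + 1 = n := by omega
    rw [h1]
    have h2 := (hmonic n).coeff_natDegree
    rw [hdeg n] at h2
    rw [h2, one_mul]
  have hndle : (Polynomial.C ((1 - q) / (1 - q ^ n)) * qDerivP q (P n)).natDegree ≤ n - 1 := by
    refine le_trans (Polynomial.natDegree_C_mul_le _ _) ?_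
    have h3 := natDegree_qDerivP_le q (P n)
    rw [hdeg n] at h3
    exact h3
  have hcoeff1 : (Polynomial.C ((1 - q) / (1 - q ^ n)) * qDerivP q (P n)).coeff (n - 1) = 1 := by
    rw [Polynomial.coeff_C_mul, hcoeff, div_mul_eq_mul_div, hSn]
    exact div_self (ne_of_gt h1qn)
  have hnd : (Polynomial.C ((1 - q) / (1 - q ^ n)) * qDerivP q (P n)).natDegree = n - 1 :=
    le_antisymm hndle (Polynomial.le_natDegree_of_ne_zero (by rw [hcoeff1]; exact one_ne_zero))
  refine ⟨Polynomial.monic_of_natDegree_le_of_coeff_eq_one (n - 1) hndle hcoeff1, hnd, ?_⟩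
  -- Part 2 : orthogonality
  intro j hj
  have hP' : ∀ x : ℝ, ϱ x * B.eval x - ϱ (q * x) * B.eval (q * x)
      = (1 - q) * x * (ϱ x * A.eval x) := by
    intro x
    by_cases hx : x = 0
    · subst hx; simp
    · have h := hPearson x hx
      unfold qD at h
      rw [div_eq_iff (mul_ne_zero hq1' hx)] at h
      linear_combination h
  set s : Polynomial ℝ := Polynomial.C (q ^ j) * Polynomial.X ^ j * A
      + Polynomial.C (∑ i ∈ Finset.range j, q ^ i) * Polynomial.X ^ (j - 1) * B with hs
  have hdA : A.natDegree ≤ 1 := by rw [hA]; compute_degree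
  have hdB : B.natDegree ≤ 2 := by rw [hB]; compute_degree
  have hsdeg : s.natDegree ≤ j + 1 := by
    cases j with
    | zero =>
      have h0 : s = A := by simp [hs]
      rw [h0]; exact hdA
    | succ m =>
      rw [hs]
      refine le_trans (Polynomial.natDegree_add_le _ _) (max_le ?_ ?_)
      · exact le_trans (natDegree_CXp_le _ _ _) (by omega)
      · simp only [Nat.add_sub_cancel]
        exact le_trans (natDegree_CXp_le _ _ _) (by omega)
  have hsupp : ∀ i ∈ s.support, i + 1 ≤ n := fun i hi => by
    have := Polynomial.le_natDegree_of_mem_supp i hi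
    omega
  have hjt2 : jackson q a b (fun ω => (P n).eval ω * s.eval ω * ϱ ω) = 0 :=
    horth_ext q a b ϱ (P n) n hsum (horth n) s hsupp
  set F1 : ℝ → ℝ :=
    fun ω => (qDerivP q (P n)).eval ω * ω ^ j * (ϱ (q * ω) * B.eval (q * ω)) with hF1
  set F2 : ℝ → ℝ := fun ω => (P n).eval ω * s.eval ω * ϱ ω with hF2
  set G : ℝ → ℝ := fun ω => (P n).eval ω * ω ^ j * (ϱ ω * B.eval ω) with hG
  have ht1 : Summable fun k : ℕ => q ^ k * (b * F1 (q ^ k * b) - a * F1 (q ^ k * a)) := by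
    rw [hF1]
    exact jsummable_summable
      (g := fun ω => (qDerivP q (P n)).eval ω * ω ^ j * (ϱ (q * ω) * B.eval (q * ω)))
      (hsum1 (qDerivP q (P n) * Polynomial.X ^ j))
      (fun ω => by
        simp only [Polynomial.eval_mul, Polynomial.eval_pow, Polynomial.eval_X])
  have ht2 : Summable fun k : ℕ => q ^ k * (b * F2 (q ^ k * b) - a * F2 (q ^ k * a)) := by
    rw [hF2]
    exact jsummable_summable
      (g := fun ω => (P n).eval ω * s.eval ω * ϱ ω)
      (hsum (P n * s))
      (fun ω => by
        simp only [Polynomial.eval_mul])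
  have hΦ : ∀ x : ℝ, (1 - q) * x * (q ^ j * F1 x + F2 x) = G x - G (q * x) := by
    intro x
    have key1 := qDerivP_eval_key q (P n) x
    have key2 := hP' x
    rw [hF1, hF2, hG, hs]
    simp only [Polynomial.eval_add, Polynomial.eval_mul, Polynomial.eval_C, Polynomial.eval_pow,
      Polynomial.eval_X]
    cases j with
    | zero =>
      simp only [pow_zero, Finset.range_zero, Finset.sum_empty, one_mul, mul_one,
        Polynomial.map_zero, zero_mul, add_zero, mul_zero]
      linear_combination (ϱ (q * x) * Polynomial.eval (q * x) B) * key1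
        - Polynomial.eval x (P n) * key2
    | succ m =>
      have key3 : (1 - q) * ∑ i ∈ Finset.range (m + 1), q ^ i = 1 - q ^ (m + 1) := by
        linear_combination -(geom_sum_mul q (m + 1))
      simp only [Nat.add_sub_cancel]
      linear_combination
        (q ^ (m + 1) * x ^ (m + 1) * (ϱ (q * x) * Polynomial.eval (q * x) B)) * key1
        - (Polynomial.eval x (P n) * q ^ (m + 1) * x ^ (m + 1)) * key2
        + (Polynomial.eval x (P n) * ϱ x * x ^ (m + 1) * Polynomial.eval x B) * key3
  have hdt : ∀ k : ℕ,
      (G (q ^ k * b) - G (q ^ (k + 1) * b)) - (G (q ^ k * a) - G (q ^ (k + 1) * a))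
      = (1 - q) * (q ^ j * (q ^ k * (b * F1 (q ^ k * b) - a * F1 (q ^ k * a)))
          + q ^ k * (b * F2 (q ^ k * b) - a * F2 (q ^ k * a))) := by
    intro k
    have hb' : q ^ (k + 1) * b = q * (q ^ k * b) := by ring
    have ha' : q ^ (k + 1) * a = q * (q ^ k * a) := by ring
    rw [hb', ha', ← hΦ (q ^ k * b), ← hΦ (q ^ k * a)]
    ring
  have hGcont : ContinuousAt G 0 := by
    rw [hG]
    exact (((Polynomial.continuous (P n)).continuousAt).mul
      ((continuous_pow j).continuousAt)).mul
      (hcont.mul ((Polynomial.continuous B).continuousAt))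
  have hsd : Summable fun k : ℕ =>
      (G (q ^ k * b) - G (q ^ (k + 1) * b)) - (G (q ^ k * a) - G (q ^ (k + 1) * a)) := by
    apply Summable.congr
      (f := fun k => (1 - q) * (q ^ j * (q ^ k * (b * F1 (q ^ k * b) - a * F1 (q ^ k * a)))
          + q ^ k * (b * F2 (q ^ k * b) - a * F2 (q ^ k * a))))
    · exact ((ht1.mul_left (q ^ j)).add ht2).mul_left (1 - q)
    · exact fun k => (hdt k).symm
  have htel := tsum_telescope_sub q a b hq0.le hq1 G hGcont hsd
  have hGb : G b = 0 := by
    rw [hG]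
    show (P n).eval b * b ^ j * (ϱ b * B.eval b) = 0
    rw [hbdry.2, mul_zero]
  have hGa : G a = 0 := by
    rw [hG]
    show (P n).eval a * a ^ j * (ϱ a * B.eval a) = 0
    rw [hbdry.1, mul_zero]
  have hT2 : (∑' k : ℕ, q ^ k * (b * F2 (q ^ k * b) - a * F2 (q ^ k * a))) = 0 := by
    have h := hjt2
    unfold jackson at h
    rcases mul_eq_zero.mp h with h' | h'
    · exact absurd h' hq1'
    · exact h'
  have hT1 : (∑' k : ℕ, q ^ k * (b * F1 (q ^ k * b) - a * F1 (q ^ k * a))) = 0 := by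
    have h2 : ∑' k : ℕ,
        ((G (q ^ k * b) - G (q ^ (k + 1) * b)) - (G (q ^ k * a) - G (q ^ (k + 1) * a)))
        = (1 - q) * (q ^ j * ∑' k : ℕ, q ^ k * (b * F1 (q ^ k * b) - a * F1 (q ^ k * a))
            + ∑' k : ℕ, q ^ k * (b * F2 (q ^ k * b) - a * F2 (q ^ k * a))) := by
      rw [tsum_congr hdt, tsum_mul_left, Summable.tsum_add (ht1.mul_left (q ^ j)) ht2, tsum_mul_left]
    rw [htel, hGa, hGb, hT2, add_zero] at h2
    have h4 : (1 - q) * (q ^ j * ∑' k : ℕ,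
        q ^ k * (b * F1 (q ^ k * b) - a * F1 (q ^ k * a))) = 0 := by linarith
    rcases mul_eq_zero.mp h4 with h' | h'
    · exact absurd h' hq1'
    · rcases mul_eq_zero.mp h' with h'' | h''
      · exact absurd h'' (pow_ne_zero j (ne_of_gt hq0))
      · exact h''
  show jackson q a b F1 = 0
  unfold jackson
  rw [hT1, mul_zero]
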